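/- Let A be a formally real integral domain which is an ℝ-algebra. Let I₀ be an imaginary unit, let h = h₀ + h₁·ι(I₀) with h₀, h₁ ∈ A, h₁ ≠ 0, and let g ∈ Quaternion A. Then there exists an I₀-sliced f ∈ Quaternion A with h * f * star h = g if and only if g is I₀-sliced and there exists k ∈ Quaternion A with g = (h₀² + h₁²)·k. (Proposition 5.11, case (i).) -/

import Mathlib

open Quaternion

/-- The componentwise extension `ι : ℍ[ℝ] → ℍ[A]` of `algebraMap ℝ A`. -/
noncomputable def qmap {A : Type*} [CommRing A] [Algebra ℝ A] (q : Quaternion ℝ) :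
    Quaternion A :=
  ⟨algebraMap ℝ A q.re, algebraMap ℝ A q.imI, algebraMap ℝ A q.imJ, algebraMap ℝ A q.imK⟩

/-- An imaginary unit: a real quaternion with zero real part squaring to `-1`. -/
def IsImaginaryUnit (I : Quaternion ℝ) : Prop := I.re = 0 ∧ I ^ 2 = -1

/-- `q` is `I`-sliced if `q = a + b·ι(I)` for some `a, b ∈ A`. -/
noncomputable def IsSliced {A : Type*} [CommRing A] [Algebra ℝ A]
    (I : Quaternion ℝ) (q : Quaternion A) : Prop :=
  ∃ a b : A, q = (a : Quaternion A) + (b : Quaternion A) * qmap I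

/-- `A` is formally real: a sum of four squares vanishes only trivially. -/
def FormallyRealFour (A : Type*) [CommRing A] : Prop :=
  ∀ a b c d : A, a ^ 2 + b ^ 2 + c ^ 2 + d ^ 2 = 0 → a = 0 ∧ b = 0 ∧ c = 0 ∧ d = 0

lemma qmap_re {A : Type*} [CommRing A] [Algebra ℝ A] (q : Quaternion ℝ) :
    (qmap (A := A) q).re = algebraMap ℝ A q.re := rfl

lemma qmap_imI {A : Type*} [CommRing A] [Algebra ℝ A] (q : Quaternion ℝ) :
    (qmap (A := A) q).imI = algebraMap ℝ A q.imI := rfl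

lemma qmap_imJ {A : Type*} [CommRing A] [Algebra ℝ A] (q : Quaternion ℝ) :
    (qmap (A := A) q).imJ = algebraMap ℝ A q.imJ := rfl

lemma qmap_imK {A : Type*} [CommRing A] [Algebra ℝ A] (q : Quaternion ℝ) :
    (qmap (A := A) q).imK = algebraMap ℝ A q.imK := rfl

lemma conj_key {A : Type*} [CommRing A] [Algebra ℝ A]
    (I₀ : Quaternion ℝ) (hI₀ : IsImaginaryUnit I₀) (h₀ h₁ c d : A) :
    (((h₀ : Quaternion A) + (h₁ : Quaternion A) * qmap I₀)) *
        ((c : Quaternion A) + (d : Quaternion A) * qmap I₀) *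
        star ((h₀ : Quaternion A) + (h₁ : Quaternion A) * qmap I₀)
      = ((h₀ ^ 2 + h₁ ^ 2 : A) : Quaternion A) *
          ((c : Quaternion A) + (d : Quaternion A) * qmap I₀) := by
  obtain ⟨hre, hsq⟩ := hI₀
  have hR : I₀.imI ^ 2 + I₀.imJ ^ 2 + I₀.imK ^ 2 = 1 := by
    have := congrArg QuaternionAlgebra.re hsq
    simp [pow_two, Quaternion.re_mul, hre] at this
    linarith [this]
  have hone : (algebraMap ℝ A I₀.imI) ^ 2 + (algebraMap ℝ A I₀.imJ) ^ 2
      + (algebraMap ℝ A I₀.imK) ^ 2 = 1 := by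
    have := congrArg (algebraMap ℝ A) hR
    simpa [map_add, map_pow] using this
  ext <;>
    simp only [qmap_re, qmap_imI, qmap_imJ, qmap_imK, hre, map_zero, Quaternion.re_mul, Quaternion.imI_mul,
      Quaternion.imJ_mul, Quaternion.imK_mul, Quaternion.re_add, Quaternion.imI_add,
      Quaternion.imJ_add, Quaternion.imK_add, Quaternion.re_star, Quaternion.imI_star,
      Quaternion.imJ_star, Quaternion.imK_star, Quaternion.re_coe, Quaternion.imI_coe,
      Quaternion.imJ_coe, Quaternion.imK_coe, mul_zero, zero_mul, add_zero, zero_add,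
      neg_zero, sub_zero, zero_sub, mul_neg, neg_mul, neg_neg] <;>
    [ linear_combination (h₁ ^ 2 * c) * hone;
      linear_combination (h₁ ^ 2 * d * algebraMap ℝ A I₀.imI) * hone;
      linear_combination (h₁ ^ 2 * d * algebraMap ℝ A I₀.imJ) * hone;
      linear_combination (h₁ ^ 2 * d * algebraMap ℝ A I₀.imK) * hone]

theorem exists_sliced_conjugated_eq_case_same_slice
    {A : Type*} [CommRing A] [IsDomain A] [Algebra ℝ A] (hFR : FormallyRealFour A)
    (I₀ : Quaternion ℝ) (hI₀ : IsImaginaryUnit I₀)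
    (h₀ h₁ : A) (hh₁ : h₁ ≠ 0) (h : Quaternion A)
    (hh : h = (h₀ : Quaternion A) + (h₁ : Quaternion A) * qmap I₀)
    (g : Quaternion A) :
    (∃ f : Quaternion A, IsSliced I₀ f ∧ h * f * star h = g) ↔
      IsSliced I₀ g ∧ ∃ k : Quaternion A, g = ((h₀ ^ 2 + h₁ ^ 2 : A) : Quaternion A) * k := by
  
  obtain ⟨hre, hsq⟩ := id hI₀
  have hR : I₀.imI ^ 2 + I₀.imJ ^ 2 + I₀.imK ^ 2 = 1 := by
    have := congrArg QuaternionAlgebra.re hsq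
    simp [pow_two, Quaternion.re_mul, hre] at this
    linarith [this]
  set x1 := algebraMap ℝ A I₀.imI with hx1
  set x2 := algebraMap ℝ A I₀.imJ with hx2
  set x3 := algebraMap ℝ A I₀.imK with hx3
  have hone : x1 ^ 2 + x2 ^ 2 + x3 ^ 2 = 1 := by
    have := congrArg (algebraMap ℝ A) hR
    simpa [map_add, map_pow] using this
  set N := h₀ ^ 2 + h₁ ^ 2 with hN
  constructor
  · rintro ⟨f, ⟨c, d, hf⟩, hconj⟩
    have hg' : g = (N : Quaternion A) * ((c : Quaternion A) + (d : Quaternion A) * qmap I₀) := by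
      rw [← hconj, hh, hf]; exact conj_key I₀ hI₀ h₀ h₁ c d
    refine ⟨⟨N * c, N * d, ?_⟩, _, hg'⟩
    rw [hg', mul_add, ← mul_assoc, ← Quaternion.coe_mul, ← Quaternion.coe_mul]
  · rintro ⟨⟨a, b, hg⟩, k, hk⟩
    subst hg
    have er := congrArg QuaternionAlgebra.re hk
    have ei := congrArg QuaternionAlgebra.imI hk
    have ej := congrArg QuaternionAlgebra.imJ hk
    have ek := congrArg QuaternionAlgebra.imK hk
    simp only [qmap_re, qmap_imI, qmap_imJ, qmap_imK, hre, map_zero, ← hx1, ← hx2, ← hx3, Quaternion.re_mul,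
      Quaternion.imI_mul, Quaternion.imJ_mul, Quaternion.imK_mul, Quaternion.re_add,
      Quaternion.imI_add, Quaternion.imJ_add, Quaternion.imK_add, Quaternion.re_coe,
      Quaternion.imI_coe, Quaternion.imJ_coe, Quaternion.imK_coe, mul_zero, zero_mul,
      add_zero, zero_add, neg_zero, sub_zero] at er ei ej ek
    set d : A := k.imI * x1 + k.imJ * x2 + k.imK * x3 with hd
    refine ⟨(k.re : Quaternion A) + (d : Quaternion A) * qmap I₀, ⟨k.re, d, rfl⟩, ?_⟩
    rw [hh, conj_key I₀ hI₀ h₀ h₁ k.re d]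
    ext <;>
      simp only [qmap_re, qmap_imI, qmap_imJ, qmap_imK, hre, map_zero, ← hx1, ← hx2, ← hx3, Quaternion.re_mul,
        Quaternion.imI_mul, Quaternion.imJ_mul, Quaternion.imK_mul, Quaternion.re_add,
        Quaternion.imI_add, Quaternion.imJ_add, Quaternion.imK_add, Quaternion.re_coe,
        Quaternion.imI_coe, Quaternion.imJ_coe, Quaternion.imK_coe, mul_zero, zero_mul,
        add_zero, zero_add, neg_zero, sub_zero] <;>
      [ linear_combination -er;
        linear_combination (-x1 ^ 2) * ei + (-x1 * x2) * ej + (-x1 * x3) * ek + (b * x1) * hone;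
        linear_combination (-x1 * x2) * ei + (-x2 ^ 2) * ej + (-x2 * x3) * ek + (b * x2) * hone;
        linear_combination (-x1 * x3) * ei + (-x2 * x3) * ej + (-x3 ^ 2) * ek + (b * x3) * hone]
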